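/- For the two-qubit Werner state ρ₂ = v|Ψ⁻⟩⟨Ψ⁻| + (1−v)𝟙/4 and the tetrahedron inputs, the quantity I := Σ_{s,t=1}^4 β_{st} tr[(|φ_s⟩⟨φ_s|^T/2)⊗(|ψ_t⟩⟨ψ_t|^T/2)·ρ₂] with β_{st} = (6δ_{st}−1)/8 equals (1−3v)/16; in particular I < 0 if and only if v > 1/3. -/

import Mathlib

open Matrix Kronecker

noncomputable section

/-- The Pauli matrices σ₁, σ₂, σ₃. -/
def pauli : Fin 3 → Matrix (Fin 2) (Fin 2) ℂ :=
  ![!![0, 1; 1, 0], !![0, -Complex.I; Complex.I, 0], !![1, 0; 0, -1]]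

/-- The tetrahedron Bloch vectors. -/
def tetraV : Fin 4 → Fin 3 → ℝ :=
  fun s i => (![![1, 1, 1], ![1, -1, -1], ![-1, 1, -1], ![-1, -1, 1]] s i) / Real.sqrt 3

/-- The tetrahedron qubit states `(𝟙 + v_s·σ)/2`. -/
def tetra (s : Fin 4) : Matrix (Fin 2) (Fin 2) ℂ :=
  (1/2 : ℂ) • (1 + ∑ i, ((tetraV s i : ℝ) : ℂ) • pauli i)

/-- The singlet state `|Ψ⁻⟩ = (|01⟩ − |10⟩)/√2`. -/
def psiMinus : Fin 2 × Fin 2 → ℂ :=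
  fun p => if p = (0, 1) then ((1 / Real.sqrt 2 : ℝ) : ℂ)
    else if p = (1, 0) then -((1 / Real.sqrt 2 : ℝ) : ℂ) else 0

/-- The two-qubit Werner state `ρ₂ = v |Ψ⁻⟩⟨Ψ⁻| + (1−v) 𝟙/4`. -/
def rho2 (v : ℝ) : Matrix (Fin 2 × Fin 2) (Fin 2 × Fin 2) ℂ :=
  (v : ℂ) • vecMulVec psiMinus (star psiMinus) + (((1 - v) / 4 : ℝ) : ℂ) • 1

lemma bloch (a : Fin 3 → ℝ) :
    (2 : ℂ)⁻¹ • ((1/2 : ℂ) • (1 + ∑ i, ((a i : ℝ) : ℂ) • pauli i))ᵀ =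
    !![(1 + (a 2 : ℂ))/4, ((a 0 : ℂ) + (a 1 : ℂ) * Complex.I)/4;
       ((a 0 : ℂ) - (a 1 : ℂ) * Complex.I)/4, (1 - (a 2 : ℂ))/4] := by
  ext i j
  fin_cases i <;> fin_cases j <;>
    simp [pauli, Fin.sum_univ_three, Matrix.one_apply, Matrix.transpose_apply,
      Matrix.vecHead, Matrix.vecTail] <;> ring

lemma trace_mul_rho2 (v : ℝ) (M : Matrix (Fin 2 × Fin 2) (Fin 2 × Fin 2) ℂ) :
    (M * rho2 v).trace = (v : ℂ) * (star psiMinus ⬝ᵥ M *ᵥ psiMinus)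
      + (((1 - v)/4 : ℝ) : ℂ) * M.trace := by
  simp only [rho2, Matrix.mul_add, Matrix.trace_add, Matrix.mul_smul, Matrix.trace_smul,
    Matrix.mul_one, smul_eq_mul]
  congr 1
  simp only [Matrix.trace, Matrix.diag, Matrix.mul_apply, vecMulVec_apply, dotProduct,
    Matrix.mulVec, Pi.star_apply, Finset.mul_sum]
  exact Finset.sum_congr rfl fun i _ => Finset.sum_congr rfl fun j _ => by ring

lemma key (v : ℝ) (a b : Fin 3 → ℝ) :
    ((((2 : ℂ)⁻¹ • ((1/2 : ℂ) • (1 + ∑ i, ((a i : ℝ) : ℂ) • pauli i))ᵀ) ⊗ₖ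
      ((2 : ℂ)⁻¹ • ((1/2 : ℂ) • (1 + ∑ i, ((b i : ℝ) : ℂ) • pauli i))ᵀ)) * rho2 v).trace
    = (((v * (1 - (a 0 * b 0 + a 1 * b 1 + a 2 * b 2)) + (1 - v)) / 16 : ℝ) : ℂ) := by
  have hs2 : ((Real.sqrt 2 : ℝ) : ℂ) * ((Real.sqrt 2 : ℝ) : ℂ) = 2 := by
    norm_cast; exact Real.mul_self_sqrt (by norm_num)
  rw [bloch a, bloch b, trace_mul_rho2, Matrix.trace_kronecker]
  simp only [dotProduct, Matrix.mulVec, Fintype.sum_prod_type, Fin.sum_univ_two,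
    psiMinus, Pi.star_apply, Matrix.kroneckerMap_apply, Prod.mk.injEq,
    Matrix.cons_val_zero, Matrix.cons_val_one, Matrix.head_cons, Matrix.head_fin_const,
    Matrix.trace_fin_two_of, Matrix.cons_val', Matrix.empty_val', Matrix.cons_val_fin_one,
    Fin.reduceEq, one_ne_zero, and_true, true_and, and_false, false_and, if_true, if_false,
    ite_true, ite_false, apply_ite (star : ℂ → ℂ), star_zero, star_neg, RCLike.star_def, Complex.conj_ofReal,
    mul_zero, zero_mul, mul_one, one_mul, add_zero, zero_add, mul_neg, neg_mul]
  simp only [Matrix.of_apply, Matrix.cons_val_zero, Matrix.cons_val_one, Matrix.head_cons,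
    Matrix.head_fin_const]
  push_cast
  generalize hrr : ((Real.sqrt 2)⁻¹ : ℂ) = r
  have hr2 : r ^ 2 = 1/2 := by
    rw [← hrr]; rw [← Complex.ofReal_inv]; push_cast
    rw [inv_pow, sq]
    norm_cast
    rw [Real.mul_self_sqrt (by norm_num)]
    norm_num
  have h1r : (1 : ℂ)/(Real.sqrt 2 : ℝ) = r := by rw [← hrr]; ring
  rw [h1r]
  set S : ℂ := ((1+(a 2:ℂ))*(1-(b 2:ℂ)) + (1-(a 2:ℂ))*(1+(b 2:ℂ))
    - ((a 0:ℂ)+(a 1:ℂ)*Complex.I)*((b 0:ℂ)-(b 1:ℂ)*Complex.I)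
    - ((a 0:ℂ)-(a 1:ℂ)*Complex.I)*((b 0:ℂ)+(b 1:ℂ)*Complex.I))/16 with hS
  linear_combination (v:ℂ) * S * hr2 + ((v:ℂ)*(a 1:ℂ)*(b 1:ℂ)/16) * Complex.I_sq

set_option maxHeartbeats 1000000 in
theorem werner2_inequality_value (v : ℝ) :
    (∑ s : Fin 4, ∑ t : Fin 4,
      (((6 * (if s = t then (1 : ℝ) else 0) - 1) / 8 : ℝ) : ℂ) *
        ((((2 : ℂ)⁻¹ • (tetra s)ᵀ) ⊗ₖ ((2 : ℂ)⁻¹ • (tetra t)ᵀ)) * rho2 v).trace)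
      = (((1 - 3*v)/16 : ℝ) : ℂ) ∧
    ((1 - 3*v)/16 < 0 ↔ v > 1/3) := by
  constructor
  · simp only [Fin.sum_univ_four]
    simp only [tetra, key]
    simp only [tetraV, Matrix.cons_val_zero, Matrix.cons_val_one, Matrix.head_cons,
      Matrix.cons_val_two, Matrix.cons_val_three, Matrix.tail_cons, Matrix.head_fin_const]
    norm_num
    have h3 : (Real.sqrt 3 : ℝ) ≠ 0 := by positivity
    have hs3 : (Real.sqrt 3 : ℝ) * Real.sqrt 3 = 3 := Real.mul_self_sqrt (by norm_num)
    push_cast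
    field_simp
    ring_nf
    norm_cast
    field_simp
    nlinarith [hs3, Real.sqrt_nonneg 3, (by rw [hs3] : v * (Real.sqrt 3 * Real.sqrt 3) = v * 3)]
  · constructor <;> intro h <;> nlinarith
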